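/- arXiv:2411.14173 — 2 statements merged into one kernel-verified Lean document; each statement's English description precedes it below -/
import Mathlib

section
/- Proposition 5.3 for d = 2 (boundedness of the Green operator): Let Ω be a bounded domain in ℝ² and μ a positive finite Borel measure on ℝ² with supp(μ) ⊆ closure(Ω) and μ(Ω) > 0. Assume dim_∞(μ) > 0. Let h : closure(Ω) × closure(Ω) → ℝ be continuous and let G(x,y) := −(1/(2π)) ln|x−y| + h(x,y) for x ≠ y. Then for every f ∈ L²(Ω,μ) there exists a constant M > 0 such that for every x ∈ Ω, the function y ↦ G(x,y) f(y) is μ-integrable on Ω and |∫_Ω G(x,y) f(y) dμ(y)| ≤ M. -/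
open MeasureTheory Metric Filter
open scoped ENNReal NNReal Topology

/-- The topological support of a measure: points all of whose neighborhoods have
positive measure. -/
def measSupport (μ : Measure (EuclideanSpace ℝ (Fin 2))) :
    Set (EuclideanSpace ℝ (Fin 2)) :=
  {x | ∀ ε : ℝ, 0 < ε → 0 < μ (ball x ε)}

/-- The lower `L^∞`-dimension of a measure:
`liminf_{δ→0⁺} ln( sup_{x ∈ supp(μ)} μ(B̄_δ(x)) ) / ln δ`. -/
noncomputable def lowerLinftyDim (μ : Measure (EuclideanSpace ℝ (Fin 2))) : ℝ :=
  Filter.liminf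
    (fun δ : ℝ =>
      Real.log ((⨆ x ∈ measSupport μ, μ (closedBall x δ)).toReal) / Real.log δ)
    (nhdsWithin 0 (Set.Ioi 0))


set_option maxHeartbeats 1000000 in
/-- Proposition 5.3 for d = 2: boundedness of the Green operator. -/
theorem green_operator_bounded
    (Ω : Set (EuclideanSpace ℝ (Fin 2)))
    (hΩo : IsOpen Ω) (hΩconn : IsConnected Ω) (hΩb : Bornology.IsBounded Ω)
    (μ : Measure (EuclideanSpace ℝ (Fin 2))) [IsFiniteMeasure μ]
    (hsupp : μ (closure Ω)ᶜ = 0) (hμΩ : 0 < μ Ω)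
    (hdim : 0 < lowerLinftyDim μ)
    (h : EuclideanSpace ℝ (Fin 2) → EuclideanSpace ℝ (Fin 2) → ℝ)
    (hh : ContinuousOn (fun p : EuclideanSpace ℝ (Fin 2) × EuclideanSpace ℝ (Fin 2) =>
      h p.1 p.2) (closure Ω ×ˢ closure Ω))
    (G : EuclideanSpace ℝ (Fin 2) → EuclideanSpace ℝ (Fin 2) → ℝ)
    (hG : ∀ x y, x ≠ y → G x y = -(1 / (2 * Real.pi)) * Real.log (dist x y) + h x y)
    (f : EuclideanSpace ℝ (Fin 2) → ℝ) (hf : MemLp f 2 (μ.restrict Ω)) :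
    ∃ M : ℝ, 0 < M ∧ ∀ x ∈ Ω,
      IntegrableOn (fun y => G x y * f y) Ω μ ∧
      |∫ y in Ω, G x y * f y ∂μ| ≤ M := by
  classical
  set S : ℝ → ℝ := fun δ => (⨆ x ∈ measSupport μ, μ (closedBall x δ)).toReal with hSdef
  set A : Set ℝ := {a | ∀ᶠ δ in nhdsWithin 0 (Set.Ioi 0), a ≤ Real.log (S δ) / Real.log δ}
    with hAdef
  have hdim' : 0 < sSup A := by
    rwa [lowerLinftyDim, liminf_eq] at hdim
  have hA1 : A.Nonempty := by
    by_contra hc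
    rw [Set.not_nonempty_iff_eq_empty] at hc
    rw [hc, Real.sSup_empty] at hdim'
    exact lt_irrefl _ hdim'
  obtain ⟨s, hsA, hs_pos⟩ := exists_lt_of_lt_csSup hA1 hdim'
  obtain ⟨δ', hδ', hsub⟩ := mem_nhdsGT_iff_exists_Ioo_subset.mp hsA
  set δ1 : ℝ := min δ' (1/2) with hδ1def
  have hδ1pos : 0 < δ1 := lt_min hδ' (by norm_num)
  have hδ1half : δ1 ≤ 1/2 := min_le_right _ _
  have hS : ∀ δ : ℝ, 0 < δ → δ < δ1 → S δ ≤ δ ^ s := by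
    intro δ hδ hδlt
    have hmem : δ ∈ Set.Ioo (0:ℝ) δ' := ⟨hδ, lt_of_lt_of_le hδlt (min_le_left _ _)⟩
    have hle : s ≤ Real.log (S δ) / Real.log δ := hsub hmem
    have hlogneg : Real.log δ < 0 :=
      Real.log_neg hδ (lt_of_lt_of_le hδlt (hδ1half.trans (by norm_num)))
    have hkey : Real.log (S δ) ≤ s * Real.log δ := by
      rw [le_div_iff_of_neg hlogneg] at hle
      linarith [hle]
    rcases eq_or_lt_of_le (ENNReal.toReal_nonneg : (0:ℝ) ≤ S δ) with h0 | hpos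
    · rw [show S δ = 0 from h0.symm]; positivity
    · calc S δ = Real.exp (Real.log (S δ)) := (Real.exp_log hpos).symm
        _ ≤ Real.exp (s * Real.log δ) := Real.exp_le_exp.mpr hkey
        _ = δ ^ s := by rw [Real.rpow_def_of_pos hδ, mul_comm]
  -- null complement of support
  have hnull : μ (measSupport μ)ᶜ = 0 := by
    apply measure_null_of_locally_null
    intro x hx
    simp only [measSupport, Set.mem_compl_iff, Set.mem_setOf_eq, not_forall] at hx
    obtain ⟨ε, hε, hμε⟩ := hx
    refine ⟨ball x ε, mem_nhdsWithin_of_mem_nhds (ball_mem_nhds x hε), ?_⟩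
    exact le_antisymm (not_lt.mp hμε) zero_le
  -- ball estimate
  have hball : ∀ (z : EuclideanSpace ℝ (Fin 2)) (δ : ℝ), 0 < δ → 2*δ < δ1 →
      μ (closedBall z δ) ≤ ENNReal.ofReal ((2*δ) ^ s) := by
    intro z δ hδ hδlt
    by_cases hint : (closedBall z δ ∩ measSupport μ).Nonempty
    · obtain ⟨w, hw1, hw2⟩ := hint
      have hsub2 : closedBall z δ ⊆ closedBall w (2*δ) := by
        intro y hy
        have h1 : dist y z ≤ δ := mem_closedBall.mp hy
        have h2 : dist w z ≤ δ := mem_closedBall.mp hw1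
        have : dist y w ≤ dist y z + dist z w := dist_triangle y z w
        rw [mem_closedBall]
        rw [dist_comm z w] at this
        linarith
      have hT : (⨆ x ∈ measSupport μ, μ (closedBall x (2*δ))) ≠ ⊤ := by
        refine ne_of_lt (lt_of_le_of_lt ?_ (measure_lt_top μ Set.univ))
        exact iSup₂_le fun x _ => measure_mono (Set.subset_univ _)
      calc μ (closedBall z δ) ≤ μ (closedBall w (2*δ)) := measure_mono hsub2
        _ ≤ ⨆ x ∈ measSupport μ, μ (closedBall x (2*δ)) := by
            exact le_iSup₂_of_le w hw2 le_rfl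
        _ = ENNReal.ofReal (S (2*δ)) := by
            rw [hSdef]; exact (ENNReal.ofReal_toReal hT).symm
        _ ≤ ENNReal.ofReal ((2*δ) ^ s) :=
            ENNReal.ofReal_le_ofReal (hS _ (by linarith) hδlt)
    · have : closedBall z δ ⊆ (measSupport μ)ᶜ := by
        intro y hy
        by_contra hy2
        exact hint ⟨y, hy, not_not.mp hy2⟩
      calc μ (closedBall z δ) ≤ μ (measSupport μ)ᶜ := measure_mono this
        _ = 0 := hnull
        _ ≤ _ := zero_le
  -- points are null
  have hpoint : ∀ z : EuclideanSpace ℝ (Fin 2), μ {z} = 0 := by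
    intro z
    refine le_antisymm ?_ zero_le
    refine ENNReal.le_of_forall_pos_le_add fun ε hε _ => ?_
    have hεpos : (0:ℝ) < ε := hε
    set δ : ℝ := min (δ1/4) ((ε:ℝ) ^ (s⁻¹) / 2) with hδdef
    have hδpos : 0 < δ := by
      apply lt_min (by linarith)
      have : (0:ℝ) < (ε:ℝ) ^ (s⁻¹) := Real.rpow_pos_of_pos hεpos _
      linarith
    have h2δ : 2*δ < δ1 := by
      have : δ ≤ δ1/4 := min_le_left _ _
      linarith
    have hpow : (2*δ) ^ s ≤ (ε:ℝ) := by
      have h1 : 2*δ ≤ (ε:ℝ) ^ (s⁻¹) := by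
        have : δ ≤ (ε:ℝ) ^ (s⁻¹) / 2 := min_le_right _ _
        linarith
      calc (2*δ) ^ s ≤ ((ε:ℝ) ^ (s⁻¹)) ^ s :=
            Real.rpow_le_rpow (by linarith) h1 hs_pos.le
        _ = (ε:ℝ) ^ (s⁻¹ * s) := (Real.rpow_mul hεpos.le _ _).symm
        _ = (ε:ℝ) := by rw [inv_mul_cancel₀ (ne_of_gt hs_pos), Real.rpow_one]
    have h1 : μ {z} ≤ ENNReal.ofReal ((2*δ) ^ s) :=
      le_trans (measure_mono (Set.singleton_subset_iff.mpr (mem_closedBall_self hδpos.le)))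
        (hball z δ hδpos h2δ)
    have h2 : μ {z} ≤ (ε : ℝ≥0∞) := by
      refine le_trans h1 ?_
      rw [← ENNReal.ofReal_coe_nnreal]
      exact ENNReal.ofReal_le_ofReal hpow
    rw [zero_add]
    exact h2
  -- uniform bound for the logarithmic kernel
  have hKex : ∃ Kbound : ℝ≥0∞, Kbound ≠ ⊤ ∧ ∀ x ∈ Ω,
      (∫⁻ y in Ω, ENNReal.ofReal ((Real.log (dist x y))^2) ∂μ) ≤ Kbound := by
    obtain ⟨D, hD⟩ := Metric.isBounded_iff.mp hΩb
    set r : ℝ := δ1/8 with hrdef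
    have hrpos : 0 < r := by positivity
    have hrlt : r < 1 := by rw [hrdef]; linarith
    set q : ℝ := (2:ℝ)⁻¹ with hqdef
    have hq0 : 0 < q := by norm_num [hqdef]
    have hq1 : q < 1 := by norm_num [hqdef]
    set ρ : ℝ := q ^ s with hρdef
    have hρ0 : 0 < ρ := Real.rpow_pos_of_pos hq0 _
    have hρ1 : ρ < 1 := Real.rpow_lt_one hq0.le hq1 hs_pos
    set Dm : ℝ := max D 1 with hDmdef
    have hDm1 : (1:ℝ) ≤ Dm := le_max_right _ _
    set L1 : ℝ := max (Real.log r⁻¹) (Real.log Dm) with hL1def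
    set L0 : ℝ := Real.log r⁻¹ + Real.log 2 with hL0def
    have hlogr : 0 < Real.log r⁻¹ := Real.log_pos ((one_lt_inv₀ hrpos).mpr hrlt)
    have hL0pos : 0 < L0 := by
      have := Real.log_pos (by norm_num : (1:ℝ) < 2)
      rw [hL0def]; linarith
    -- summability
    have hsumm : Summable (fun k : ℕ => ((k:ℝ)+1)^2 * L0^2 * ((2*r) ^ s * ρ^k)) := by
      have h1 : Summable (fun k : ℕ => ((k:ℝ)^2 * ρ^k + 2*((k:ℝ)^1 * ρ^k)) + ρ^k) := by
        have hρn : ‖ρ‖ < 1 := by rwa [Real.norm_eq_abs, abs_of_pos hρ0]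
        exact ((summable_pow_mul_geometric_of_norm_lt_one 2 hρn).add
          ((summable_pow_mul_geometric_of_norm_lt_one 1 hρn).mul_left 2)).add
          (summable_geometric_of_norm_lt_one hρn)
      have h2 : Summable (fun k : ℕ => ((k:ℝ)+1)^2 * ρ^k) := by
        refine h1.congr fun k => ?_
        ring
      have h3 := h2.mul_left (L0^2 * (2*r) ^ s)
      refine h3.congr fun k => ?_
      ring
    set Ctsum : ℝ := ∑' k : ℕ, ((k:ℝ)+1)^2 * L0^2 * ((2*r) ^ s * ρ^k) with hCdef
    refine ⟨ENNReal.ofReal Ctsum + ENNReal.ofReal (L1^2) * μ Set.univ, ?_, ?_⟩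
    · exact ENNReal.add_ne_top.mpr ⟨ENNReal.ofReal_ne_top,
        ENNReal.mul_ne_top ENNReal.ofReal_ne_top (measure_ne_top μ _)⟩
    intro x hx
    set φ : EuclideanSpace ℝ (Fin 2) → ℝ≥0∞ :=
      fun y => ENNReal.ofReal ((Real.log (dist x y))^2) with hφdef
    set Ann : ℕ → Set (EuclideanSpace ℝ (Fin 2)) :=
      fun k => (fun y => dist x y) ⁻¹' Set.Ioc (r * q^(k+1)) (r * q^k) with hAnndef
    set Bfar : Set (EuclideanSpace ℝ (Fin 2)) :=
      Ω ∩ (fun y => dist x y) ⁻¹' Set.Ioi r with hBdef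
    have hdistm : Measurable fun y : EuclideanSpace ℝ (Fin 2) => dist x y :=
      measurable_const.dist measurable_id
    have hAnnm : ∀ k, MeasurableSet (Ann k) := fun k => hdistm measurableSet_Ioc
    have hBm : MeasurableSet Bfar := hΩo.measurableSet.inter (hdistm measurableSet_Ioi)
    -- covering
    have hcover : Ω ⊆ ({x} ∪ ⋃ k : ℕ, Ann k) ∪ Bfar := by
      intro y hy
      rcases eq_or_lt_of_le (dist_nonneg : (0:ℝ) ≤ dist x y) with h0 | hpos
      · left; left
        have hxy : x = y := dist_eq_zero.mp h0.symm
        simp [hxy.symm]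
      rcases le_or_gt (dist x y) r with hle | hgt
      · left; right
        have hex : ∃ m : ℕ, r * q^m < dist x y := by
          obtain ⟨m, hm⟩ := exists_pow_lt_of_lt_one (div_pos hpos hrpos) hq1
          refine ⟨m, ?_⟩
          have h1 := (lt_div_iff₀ hrpos).mp hm
          linarith [h1]
        set n := Nat.find hex with hndef
        have hn : r * q^n < dist x y := Nat.find_spec hex
        have hn0 : n ≠ 0 := by
          intro hc
          rw [hc, pow_zero, mul_one] at hn
          linarith
        obtain ⟨k, hk⟩ := Nat.exists_eq_succ_of_ne_zero hn0
        have hmin : ¬ (r * q^k < dist x y) := Nat.find_min hex (by omega)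
        refine Set.mem_iUnion.mpr ⟨k, ?_⟩
        refine ⟨?_, not_lt.mp hmin⟩
        rw [← Nat.succ_eq_add_one, ← hk]
        exact hn
      · right; exact ⟨hy, hgt⟩
    -- Bfar bound
    have hBbound : (∫⁻ y in Bfar, φ y ∂μ) ≤ ENNReal.ofReal (L1^2) * μ Set.univ := by
      have hpt : ∀ y ∈ Bfar, φ y ≤ ENNReal.ofReal (L1^2) := by
        rintro y ⟨hyΩ, hyr⟩
        have hyr' : r < dist x y := hyr
        have htpos : 0 < dist x y := lt_trans hrpos hyr'
        have hd : dist x y ≤ Dm := (hD hx hyΩ).trans (le_max_left _ _)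
        have habs : |Real.log (dist x y)| ≤ L1 := by
          rw [abs_le]
          constructor
          · have h1 : Real.log r < Real.log (dist x y) := Real.log_lt_log hrpos hyr'
            have h2 : Real.log r = -Real.log r⁻¹ := by rw [Real.log_inv]; ring
            have h3 : Real.log r⁻¹ ≤ L1 := le_max_left _ _
            linarith
          · have h1 : Real.log (dist x y) ≤ Real.log Dm := Real.log_le_log htpos hd
            exact h1.trans (le_max_right _ _)
        apply ENNReal.ofReal_le_ofReal
        calc (Real.log (dist x y))^2 = |Real.log (dist x y)|^2 := (sq_abs _).symm
          _ ≤ L1^2 := by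
              apply pow_le_pow_left₀ (abs_nonneg _) habs
      calc (∫⁻ y in Bfar, φ y ∂μ) ≤ ∫⁻ _ in Bfar, ENNReal.ofReal (L1^2) ∂μ :=
            setLIntegral_mono' hBm hpt
        _ = ENNReal.ofReal (L1^2) * μ Bfar := setLIntegral_const _ _
        _ ≤ ENNReal.ofReal (L1^2) * μ Set.univ :=
            mul_le_mul_right (measure_mono (Set.subset_univ _)) _
    -- annulus bounds
    have hAnnBound : ∀ k : ℕ, (∫⁻ y in Ann k, φ y ∂μ) ≤
        ENNReal.ofReal (((k:ℝ)+1)^2 * L0^2 * ((2*r) ^ s * ρ^k)) := by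
      intro k
      have hqk1 : q^k ≤ 1 := pow_le_one₀ hq0.le hq1.le
      have hrq : 0 < r * q^k := by positivity
      have h2rq : 2*(r*q^k) < δ1 := by
        have h1 : r * q^k ≤ r := mul_le_of_le_one_right hrpos.le hqk1
        rw [hrdef] at h1 ⊢
        linarith
      have hk0 : (0:ℝ) ≤ (k:ℝ) := Nat.cast_nonneg k
      have hk1 : (1:ℝ) ≤ (k:ℝ)+1 := by linarith
      have hlog2 : 0 < Real.log 2 := Real.log_pos (by norm_num)
      have hpt : ∀ y ∈ Ann k, φ y ≤ ENNReal.ofReal ((((k:ℝ)+1)*L0)^2) := by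
        rintro y ⟨hlo, hhi⟩
        have htpos : 0 < dist x y := lt_trans (by positivity) hlo
        have hup : Real.log (dist x y) ≤ 0 := by
          apply Real.log_nonpos htpos.le
          have : r * q^k ≤ r := mul_le_of_le_one_right hrpos.le hqk1
          linarith [hhi, hrlt]
        have hlogrq : Real.log (r * q^(k+1)) = -Real.log r⁻¹ - ((k:ℝ)+1) * Real.log 2 := by
          rw [Real.log_mul hrpos.ne' (by positivity), Real.log_pow, hqdef, Real.log_inv,
            Real.log_inv]
          push_cast
          ring
        have hlo' : Real.log (r * q^(k+1)) < Real.log (dist x y) :=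
          Real.log_lt_log (by positivity) hlo
        have habs : |Real.log (dist x y)| ≤ ((k:ℝ)+1)*L0 := by
          clear_value L0 r q ρ Dm L1
          rw [abs_le]
          have hkl : (0:ℝ) ≤ (k:ℝ) * Real.log r⁻¹ := mul_nonneg hk0 hlogr.le
          have hLexp : ((k:ℝ)+1)*L0
              = Real.log r⁻¹ + ((k:ℝ)+1)*Real.log 2 + (k:ℝ)*Real.log r⁻¹ := by
            rw [hL0def]; ring
          rw [hlogrq] at hlo'
          constructor
          · have h1 : Real.log r⁻¹ + ((k:ℝ)+1)*Real.log 2 ≤ ((k:ℝ)+1)*L0 := by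
              rw [hLexp]; linarith
            linarith
          · nlinarith [mul_nonneg (by linarith : (0:ℝ) ≤ (k:ℝ)+1) hL0pos.le]
        apply ENNReal.ofReal_le_ofReal
        calc (Real.log (dist x y))^2 = |Real.log (dist x y)|^2 := (sq_abs _).symm
          _ ≤ (((k:ℝ)+1)*L0)^2 := by
              apply pow_le_pow_left₀ (abs_nonneg _) habs
      have hsubball : Ann k ⊆ closedBall x (r * q^k) := by
        rintro y ⟨_, hhi⟩
        rw [mem_closedBall, dist_comm]
        exact hhi
      calc (∫⁻ y in Ann k, φ y ∂μ) ≤ ∫⁻ _ in Ann k, ENNReal.ofReal ((((k:ℝ)+1)*L0)^2) ∂μ :=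
            setLIntegral_mono' (hAnnm k) hpt
        _ = ENNReal.ofReal ((((k:ℝ)+1)*L0)^2) * μ (Ann k) := setLIntegral_const _ _
        _ ≤ ENNReal.ofReal ((((k:ℝ)+1)*L0)^2) * ENNReal.ofReal ((2*(r*q^k)) ^ s) :=
            mul_le_mul_right (le_trans (measure_mono hsubball) (hball x _ hrq h2rq)) _
        _ = ENNReal.ofReal (((k:ℝ)+1)^2 * L0^2 * ((2*r) ^ s * ρ^k)) := by
            rw [← ENNReal.ofReal_mul (by positivity)]
            congr 1
            have hsplit : (2*(r*q^k)) ^ s = (2*r) ^ s * ρ^k := by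
              rw [show 2*(r*q^k) = (2*r)*q^k by ring,
                Real.mul_rpow (by positivity) (by positivity),
                ← Real.rpow_natCast q k, ← Real.rpow_mul hq0.le, mul_comm (k:ℝ) s,
                Real.rpow_mul hq0.le, Real.rpow_natCast]
            rw [hsplit]
            ring
    -- assemble
    show (∫⁻ y in Ω, φ y ∂μ) ≤ _
    calc (∫⁻ y in Ω, φ y ∂μ) ≤ ∫⁻ y in ({x} ∪ ⋃ k : ℕ, Ann k) ∪ Bfar, φ y ∂μ :=
          lintegral_mono_set hcover
      _ ≤ (∫⁻ y in {x} ∪ ⋃ k : ℕ, Ann k, φ y ∂μ) + ∫⁻ y in Bfar, φ y ∂μ :=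
          lintegral_union_le _ _ _
      _ ≤ ((∫⁻ y in ({x} : Set (EuclideanSpace ℝ (Fin 2))), φ y ∂μ)
            + ∫⁻ y in ⋃ k : ℕ, Ann k, φ y ∂μ) + ∫⁻ y in Bfar, φ y ∂μ :=
          add_le_add_left (lintegral_union_le _ _ _) _
      _ = (∫⁻ y in ⋃ k : ℕ, Ann k, φ y ∂μ) + ∫⁻ y in Bfar, φ y ∂μ := by
          rw [setLIntegral_measure_zero _ _ (hpoint x), zero_add]
      _ ≤ (∑' k : ℕ, ∫⁻ y in Ann k, φ y ∂μ) + ∫⁻ y in Bfar, φ y ∂μ :=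
          add_le_add_left (lintegral_iUnion_le _ _) _
      _ ≤ ENNReal.ofReal Ctsum + ENNReal.ofReal (L1^2) * μ Set.univ := by
          apply add_le_add _ hBbound
          calc (∑' k : ℕ, ∫⁻ y in Ann k, φ y ∂μ)
              ≤ ∑' k : ℕ, ENNReal.ofReal (((k:ℝ)+1)^2 * L0^2 * ((2*r) ^ s * ρ^k)) :=
                ENNReal.tsum_le_tsum hAnnBound
            _ = ENNReal.ofReal Ctsum :=
                (ENNReal.ofReal_tsum_of_nonneg (fun k => by positivity) hsumm).symm
  obtain ⟨Kbound, hKtop, hK⟩ := hKex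
  have hπ : 0 < Real.pi := Real.pi_pos
  set c : ℝ := 1 / (2 * Real.pi) with hcdef
  have hc : 0 < c := by positivity
  -- bound for h on the compact set
  have hKc : IsCompact (closure Ω ×ˢ closure Ω) :=
    hΩb.isCompact_closure.prod hΩb.isCompact_closure
  obtain ⟨H, hH⟩ := hKc.exists_bound_of_continuousOn hh
  have hH0 : 0 ≤ H := by
    rcases (hΩconn.nonempty : Ω.Nonempty) with ⟨x₀, hx₀⟩
    have := hH (x₀, x₀) ⟨subset_closure hx₀, subset_closure hx₀⟩
    exact le_trans (norm_nonneg _) this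
  -- the uniform bound for the G-part
  set JGbound : ℝ≥0∞ :=
    ENNReal.ofReal (2*c^2) * Kbound + ENNReal.ofReal (2*H^2) * μ Set.univ with hJGdef
  have hJGtop : JGbound ≠ ⊤ :=
    ENNReal.add_ne_top.mpr ⟨ENNReal.mul_ne_top ENNReal.ofReal_ne_top hKtop,
      ENNReal.mul_ne_top ENNReal.ofReal_ne_top (measure_ne_top μ _)⟩
  set Ibound : ℝ≥0∞ := JGbound ^ (1/(2:ℝ)) * eLpNorm f 2 (μ.restrict Ω) with hIdef
  have hItop : Ibound ≠ ⊤ := by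
    apply ENNReal.mul_ne_top
    · exact (ENNReal.rpow_lt_top_of_nonneg (by norm_num) hJGtop).ne
    · exact hf.eLpNorm_ne_top
  refine ⟨Ibound.toReal + 1, by positivity, ?_⟩
  intro x hx
  -- a.e. facts
  have hxae : ∀ᵐ y ∂(μ.restrict Ω), y ∈ ({x}ᶜ : Set (EuclideanSpace ℝ (Fin 2))) := by
    refine compl_mem_ae_iff.mpr ?_
    rw [Measure.restrict_apply (measurableSet_singleton x)]
    exact le_antisymm (le_trans (measure_mono Set.inter_subset_left) (hpoint x).le) zero_le
  -- measurability
  have hgm : AEStronglyMeasurable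
      (fun y => -c * Real.log (dist x y) + h x y) (μ.restrict Ω) := by
    apply AEStronglyMeasurable.add
    · exact ((Real.measurable_log.comp (measurable_const.dist measurable_id)).const_mul
        (-c)).aestronglyMeasurable
    · have hcont : ContinuousOn (fun y => h x y) (closure Ω) := by
        have hmap : Continuous fun y : EuclideanSpace ℝ (Fin 2) => ((x, y) :
            EuclideanSpace ℝ (Fin 2) × EuclideanSpace ℝ (Fin 2)) :=
          continuous_const.prodMk continuous_id
        exact hh.comp hmap.continuousOn
          (fun y hy => ⟨subset_closure hx, hy⟩)
      exact (hcont.mono subset_closure).aestronglyMeasurable hΩo.measurableSet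
  have hGae : (fun y => G x y) =ᵐ[μ.restrict Ω]
      (fun y => -c * Real.log (dist x y) + h x y) := by
    filter_upwards [hxae] with y hy
    have hxy : x ≠ y := fun hc' => hy (by simp [hc'.symm])
    rw [hG x y hxy, hcdef]
  have hGsm : AEStronglyMeasurable (fun y => G x y) (μ.restrict Ω) :=
    hgm.congr hGae.symm
  -- pointwise square bound, a.e.
  have hsqb : ∀ᵐ y ∂(μ.restrict Ω),
      (‖G x y‖₊ : ℝ≥0∞) ^ (2:ℝ)
        ≤ ENNReal.ofReal (2*c^2*(Real.log (dist x y))^2) + ENNReal.ofReal (2*H^2) := by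
    filter_upwards [hxae, ae_restrict_mem hΩo.measurableSet] with y hy hyΩ
    have hxy : x ≠ y := fun hc' => hy (by simp [hc'.symm])
    have hhb : |h x y| ≤ H := by
      have := hH (x, y) ⟨subset_closure hx, subset_closure hyΩ⟩
      simpa using this
    have hGb : |G x y| ≤ c * |Real.log (dist x y)| + H := by
      rw [hG x y hxy]
      calc |(-c) * Real.log (dist x y) + h x y|
          ≤ |(-c) * Real.log (dist x y)| + |h x y| := abs_add_le _ _
        _ = c * |Real.log (dist x y)| + |h x y| := by
            rw [abs_mul, abs_neg, abs_of_pos hc]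
        _ ≤ c * |Real.log (dist x y)| + H := by linarith
    have hsq : |G x y|^2 ≤ 2*c^2*(Real.log (dist x y))^2 + 2*H^2 := by
      have h1 : |G x y|^2 ≤ (c * |Real.log (dist x y)| + H)^2 := by
        apply pow_le_pow_left₀ (abs_nonneg _) hGb
      have h2 : (c * |Real.log (dist x y)| + H)^2
          ≤ 2*(c*|Real.log (dist x y)|)^2 + 2*H^2 := by
        nlinarith [sq_nonneg (c * |Real.log (dist x y)| - H)]
      have h3 : (c*|Real.log (dist x y)|)^2 = c^2 * (Real.log (dist x y))^2 := by
        rw [mul_pow, sq_abs]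
      nlinarith [h1, h2, h3]
    calc (‖G x y‖₊ : ℝ≥0∞) ^ (2:ℝ) = ENNReal.ofReal (|G x y|) ^ (2:ℝ) := by
          rw [← Real.enorm_eq_ofReal_abs, enorm_eq_nnnorm]
      _ = ENNReal.ofReal (|G x y|^2) := by
          rw [ENNReal.ofReal_rpow_of_nonneg (abs_nonneg _) (by norm_num : (0:ℝ) ≤ 2)]
          congr 1
          rw [show (2:ℝ) = ((2:ℕ):ℝ) by norm_num, Real.rpow_natCast]
      _ ≤ ENNReal.ofReal (2*c^2*(Real.log (dist x y))^2 + 2*H^2) :=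
          ENNReal.ofReal_le_ofReal hsq
      _ = _ := ENNReal.ofReal_add (by positivity) (by positivity)
  -- L² bound for G x ·
  have hJG : (∫⁻ y in Ω, (‖G x y‖₊ : ℝ≥0∞) ^ (2:ℝ) ∂μ) ≤ JGbound := by
    calc (∫⁻ y in Ω, (‖G x y‖₊ : ℝ≥0∞) ^ (2:ℝ) ∂μ)
        ≤ ∫⁻ y in Ω, (ENNReal.ofReal (2*c^2*(Real.log (dist x y))^2)
            + ENNReal.ofReal (2*H^2)) ∂μ := lintegral_mono_ae hsqb
      _ = (∫⁻ y in Ω, ENNReal.ofReal (2*c^2*(Real.log (dist x y))^2) ∂μ)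
            + ENNReal.ofReal (2*H^2) * (μ.restrict Ω) Set.univ := by
          rw [lintegral_add_right _ measurable_const, lintegral_const]
      _ ≤ (∫⁻ y in Ω, ENNReal.ofReal (2*c^2) * ENNReal.ofReal ((Real.log (dist x y))^2) ∂μ)
            + ENNReal.ofReal (2*H^2) * μ Set.univ := by
          apply add_le_add
          · exact lintegral_mono fun y => le_of_eq (ENNReal.ofReal_mul (by positivity))
          · exact mul_le_mul_right (Measure.restrict_apply_le _ _) _
      _ ≤ JGbound := by
          rw [lintegral_const_mul' _ _ ENNReal.ofReal_ne_top]
          exact add_le_add (mul_le_mul_right (hK x hx) _) le_rfl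
  -- Hölder
  have hHolder : (∫⁻ y in Ω, (‖G x y * f y‖₊ : ℝ≥0∞) ∂μ) ≤ Ibound := by
    have hconj : Real.HolderConjugate 2 2 := Real.HolderConjugate.two_two
    have happ := ENNReal.lintegral_mul_le_Lp_mul_Lq (μ.restrict Ω) hconj
      hGsm.enorm hf.1.enorm
    have heq : ∀ y, ((fun y => (‖G x y‖₊ : ℝ≥0∞)) * fun y => (‖f y‖₊ : ℝ≥0∞)) y
        = (‖G x y * f y‖₊ : ℝ≥0∞) := by
      intro y
      simp [nnnorm_mul, ENNReal.coe_mul]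
    calc (∫⁻ y in Ω, (‖G x y * f y‖₊ : ℝ≥0∞) ∂μ)
        = ∫⁻ y in Ω, ((fun y => (‖G x y‖₊ : ℝ≥0∞)) * fun y => (‖f y‖₊ : ℝ≥0∞)) y ∂μ := by
          exact lintegral_congr fun y => (heq y).symm
      _ ≤ (∫⁻ y in Ω, (‖G x y‖₊ : ℝ≥0∞) ^ (2:ℝ) ∂μ) ^ (1/(2:ℝ))
            * (∫⁻ y in Ω, (‖f y‖₊ : ℝ≥0∞) ^ (2:ℝ) ∂μ) ^ (1/(2:ℝ)) := happ
      _ ≤ JGbound ^ (1/(2:ℝ)) * eLpNorm f 2 (μ.restrict Ω) := by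
          apply mul_le_mul'
          · exact ENNReal.rpow_le_rpow hJG (by norm_num)
          · rw [eLpNorm_eq_lintegral_rpow_enorm_toReal (by norm_num) (by norm_num)]
            norm_num [enorm_eq_nnnorm]
      _ = Ibound := rfl
  have hint : IntegrableOn (fun y => G x y * f y) Ω μ := by
    refine ⟨hGsm.mul hf.1, ?_⟩
    exact lt_of_le_of_lt hHolder (lt_top_iff_ne_top.mpr hItop)
  refine ⟨hint, ?_⟩
  have habs : |∫ y in Ω, G x y * f y ∂μ| ≤ ∫ y in Ω, |G x y| * |f y| ∂μ := by
    simpa [Real.norm_eq_abs, abs_mul] using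
      norm_integral_le_integral_norm (μ := μ.restrict Ω) (fun y => G x y * f y)
  have heq2 : ENNReal.ofReal (∫ y in Ω, |G x y| * |f y| ∂μ)
      = ∫⁻ y in Ω, (‖G x y‖₊ : ℝ≥0∞) * (‖f y‖₊ : ℝ≥0∞) ∂μ := by
    simpa [Real.norm_eq_abs, abs_mul, enorm_eq_nnnorm] using
      ofReal_integral_norm_eq_lintegral_enorm hint
  have heq3 : (∫⁻ y in Ω, (‖G x y‖₊ : ℝ≥0∞) * (‖f y‖₊ : ℝ≥0∞) ∂μ)
      = ∫⁻ y in Ω, (‖G x y * f y‖₊ : ℝ≥0∞) ∂μ :=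
    lintegral_congr fun y => by rw [nnnorm_mul, ENNReal.coe_mul]
  have hnn : 0 ≤ ∫ y in Ω, |G x y| * |f y| ∂μ :=
    integral_nonneg fun y => mul_nonneg (abs_nonneg _) (abs_nonneg _)
  have hfin : (∫ y in Ω, |G x y| * |f y| ∂μ) ≤ Ibound.toReal := by
    have := ENNReal.toReal_mono hItop
      (le_trans (le_of_eq (heq2.trans heq3)) hHolder)
    rwa [ENNReal.toReal_ofReal hnn] at this
  linarith [habs, hfin]
end

section
/- Interior continuity of the Green operator for d = 2 (Step 1 in the proof of Theorem 1.2): Let Ω be a bounded domain in ℝ² and μ a positive finite Borel measure on ℝ² with supp(μ) ⊆ closure(Ω) and μ(Ω) > 0. Assume dim_∞(μ) > 0. Let h : closure(Ω) × closure(Ω) → ℝ be continuous and let G(x,y) := −(1/(2π)) ln|x−y| + h(x,y) for x ≠ y. Then for every f ∈ L²(Ω,μ), the function x ↦ ∫_Ω G(x,y) f(y) dμ(y) is continuous on Ω. -/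
open MeasureTheory Metric Filter

open Topology
open scoped ENNReal NNReal

lemma auxSupportNull (μ : Measure (EuclideanSpace ℝ (Fin 2))) :
    μ (measSupport μ)ᶜ = 0 := by
  apply measure_null_of_locally_null
  intro x hx
  simp only [measSupport, Set.mem_compl_iff, Set.mem_setOf_eq, not_forall] at hx
  obtain ⟨ε, hε, h0⟩ := hx
  refine ⟨ball x ε, nhdsWithin_le_nhds (ball_mem_nhds x hε), ?_⟩
  simpa using (not_lt.mp h0).antisymm zero_le

lemma auxDecay (μ : Measure (EuclideanSpace ℝ (Fin 2))) [IsFiniteMeasure μ]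
    (hdim : 0 < lowerLinftyDim μ) :
    ∃ s C δ₀ : ℝ, 0 < s ∧ 0 < C ∧ 0 < δ₀ ∧ δ₀ < 1 ∧
      ∀ x δ, 0 < δ → δ ≤ δ₀ → μ (closedBall x δ) ≤ ENNReal.ofReal (C * δ ^ s) := by
  unfold lowerLinftyDim at hdim
  rw [Filter.liminf_eq] at hdim
  set Q : ℝ → ℝ := fun δ =>
    Real.log ((⨆ x ∈ measSupport μ, μ (closedBall x δ)).toReal) / Real.log δ with hQ
  set A : Set ℝ := {a | ∀ᶠ δ in 𝓝[>] (0:ℝ), a ≤ Q δ} with hA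
  have hne : A.Nonempty := by
    by_contra hemp
    rw [Set.not_nonempty_iff_eq_empty] at hemp
    rw [hemp, Real.sSup_empty] at hdim
    exact lt_irrefl _ hdim
  have hbdd : BddAbove A := by
    by_contra hb
    rw [Real.sSup_of_not_bddAbove hb] at hdim
    exact lt_irrefl _ hdim
  obtain ⟨b, hbA, hb0⟩ := exists_lt_of_lt_csSup hne hdim
  rw [hA, Set.mem_setOf_eq, eventually_iff, mem_nhdsGT_iff_exists_Ioo_subset] at hbA
  obtain ⟨δ₁, hδ₁, hsub⟩ := hbA
  rw [Set.mem_Ioi] at hδ₁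
  -- key claim for support points
  have key : ∀ x ∈ measSupport μ, ∀ δ : ℝ, 0 < δ → δ < δ₁ → δ < 1 →
      μ (closedBall x δ) ≤ ENNReal.ofReal (δ ^ b) := by
    intro x hx δ hδ hδδ₁ hδ1
    have hQδ : b ≤ Q δ := hsub ⟨hδ, hδδ₁⟩
    set S : ℝ≥0∞ := ⨆ x' ∈ measSupport μ, μ (closedBall x' δ) with hS
    have hStop : S ≠ ⊤ := by
      refine ne_top_of_le_ne_top (measure_ne_top μ Set.univ) ?_
      exact iSup₂_le fun x' _ => measure_mono (Set.subset_univ _)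
    have hle : μ (closedBall x δ) ≤ S :=
      le_biSup (fun x' => μ (closedBall x' δ)) hx
    have hlogδ : Real.log δ < 0 := Real.log_neg hδ hδ1
    have hlog : Real.log S.toReal ≤ b * Real.log δ :=
      (le_div_iff_of_neg hlogδ).mp hQδ
    have hSr : S.toReal ≤ δ ^ b := by
      rcases eq_or_lt_of_le (ENNReal.toReal_nonneg (a := S)) with h0 | h0
      · rw [← h0]; exact (Real.rpow_pos_of_pos hδ b).le
      · have := (Real.log_le_iff_le_exp h0).mp hlog
        rwa [mul_comm, ← Real.rpow_def_of_pos hδ] at this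
        -- rpow_def_of_pos : x ^ y = exp (log x * y)
    calc μ (closedBall x δ) ≤ S := hle
      _ = ENNReal.ofReal S.toReal := (ENNReal.ofReal_toReal hStop).symm
      _ ≤ ENNReal.ofReal (δ ^ b) := ENNReal.ofReal_le_ofReal hSr
  refine ⟨b, (2:ℝ) ^ b, min δ₁ 1 / 4, hb0, Real.rpow_pos_of_pos two_pos b, by positivity,
    ?_, ?_⟩
  · have h1 : min δ₁ 1 ≤ 1 := min_le_right _ _
    linarith
  · intro x δ hδ hδ₀
    have h2δ1 : 2 * δ < δ₁ := by
      have := min_le_left δ₁ 1; linarith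
    have h2δlt1 : 2 * δ < 1 := by
      have := min_le_right δ₁ 1; linarith
    by_cases hcap : (measSupport μ ∩ closedBall x δ).Nonempty
    · obtain ⟨p, hp, hpd⟩ := hcap
      have hsub2 : closedBall x δ ⊆ closedBall p (2 * δ) := by
        intro y hy
        rw [mem_closedBall] at hy hpd ⊢
        calc dist y p ≤ dist y x + dist x p := dist_triangle _ _ _
          _ ≤ δ + δ := add_le_add hy (by rwa [dist_comm])
          _ = 2 * δ := by ring
      calc μ (closedBall x δ) ≤ μ (closedBall p (2 * δ)) := measure_mono hsub2
        _ ≤ ENNReal.ofReal ((2 * δ) ^ b) := key p hp _ (by linarith) h2δ1 h2δlt1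
        _ = ENNReal.ofReal ((2:ℝ) ^ b * δ ^ b) := by
            rw [Real.mul_rpow (by norm_num) hδ.le]
    · have hdisj : closedBall x δ ⊆ (measSupport μ)ᶜ := by
        intro y hy hmem
        exact hcap ⟨y, hmem, hy⟩
      have : μ (closedBall x δ) = 0 :=
        measure_mono_null hdisj (auxSupportNull μ)
      rw [this]; exact zero_le

lemma auxRpowTendsto {s : ℝ} (hs : 0 < s) (C : ℝ) :
    Tendsto (fun δ : ℝ => ENNReal.ofReal (C * δ ^ s)) (𝓝[>] (0:ℝ)) (𝓝 0) := by
  have h1 : Tendsto (fun δ : ℝ => δ ^ s) (𝓝[>] (0:ℝ)) (𝓝 0) := by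
    have := (Real.continuousAt_rpow_const 0 s (Or.inr hs.le)).tendsto
    rw [Real.zero_rpow hs.ne'] at this
    exact this.mono_left nhdsWithin_le_nhds
  have h2 : Tendsto (fun δ : ℝ => C * δ ^ s) (𝓝[>] (0:ℝ)) (𝓝 0) := by
    simpa using h1.const_mul C
  have := (ENNReal.continuous_ofReal.tendsto 0).comp h2
  simpa [Function.comp_def] using this

lemma auxAtom (μ : Measure (EuclideanSpace ℝ (Fin 2))) (C s δ₀ : ℝ)
    (hs : 0 < s) (hδ₀ : 0 < δ₀)
    (hdecay : ∀ x δ, 0 < δ → δ ≤ δ₀ → μ (closedBall x δ) ≤ ENNReal.ofReal (C * δ ^ s))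
    (x : EuclideanSpace ℝ (Fin 2)) : μ {x} = 0 := by
  have hev : ∀ᶠ δ in 𝓝[>] (0:ℝ), μ {x} ≤ ENNReal.ofReal (C * δ ^ s) := by
    filter_upwards [Ioo_mem_nhdsGT hδ₀] with δ hδ
    exact le_trans (measure_mono (by simp [Set.singleton_subset_iff, mem_closedBall,
      hδ.1.le])) (hdecay x δ hδ.1 hδ.2.le)
  have := ge_of_tendsto (auxRpowTendsto hs C) hev
  simpa using this

lemma auxRealCalc (C s ρ : ℝ) (hρ : 0 < ρ) (k : ℕ) :
    (ρ / 2^(k+1)) ^ (-(s/2)) * (C * (ρ / 2^k) ^ s)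
      = C * (2:ℝ)^(s/2) * ρ^(s/2) * ((2:ℝ)^(-(s/2)))^k := by
  have h2k : ∀ m : ℕ, Real.log (ρ / 2^m) = Real.log ρ - m * Real.log 2 := by
    intro m
    rw [Real.log_div hρ.ne' (by positivity), Real.log_pow]
  have e1 : (ρ / 2^(k+1):ℝ) ^ (-(s/2))
      = Real.exp ((Real.log ρ - ((k:ℝ)+1) * Real.log 2) * (-(s/2))) := by
    rw [Real.rpow_def_of_pos (by positivity), h2k (k+1)]
    push_cast; ring_nf
  have e2 : (ρ / 2^k:ℝ) ^ s = Real.exp ((Real.log ρ - (k:ℝ) * Real.log 2) * s) := by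
    rw [Real.rpow_def_of_pos (by positivity), h2k k]
  have e3 : (2:ℝ) ^ (s/2) = Real.exp (Real.log 2 * (s/2)) :=
    Real.rpow_def_of_pos two_pos _
  have e4 : ((2:ℝ) ^ (-(s/2))) ^ k = Real.exp ((k:ℝ) * (Real.log 2 * (-(s/2)))) := by
    rw [Real.exp_nat_mul, ← Real.rpow_def_of_pos two_pos]
  have e5 : ρ ^ (s/2) = Real.exp (Real.log ρ * (s/2)) := Real.rpow_def_of_pos hρ _
  rw [e1, e2, e3, e4, e5]
  have harg : (Real.log ρ - ((k:ℝ)+1) * Real.log 2) * (-(s/2))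
      + (Real.log ρ - (k:ℝ) * Real.log 2) * s
      = Real.log 2 * (s/2) + Real.log ρ * (s/2) + (k:ℝ) * (Real.log 2 * (-(s/2))) := by
    ring
  have lhs : ∀ X Y : ℝ, Real.exp X * (C * Real.exp Y) = C * Real.exp (X+Y) := by
    intro X Y; rw [Real.exp_add]; ring
  have rhs : ∀ a b c : ℝ, C * Real.exp a * Real.exp b * Real.exp c = C * Real.exp (a+b+c) := by
    intro a b c; rw [Real.exp_add, Real.exp_add]; ring
  rw [lhs, rhs]
  congr 1
  ring

lemma auxAnnuli (μ : Measure (EuclideanSpace ℝ (Fin 2))) (C s δ₀ : ℝ)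
    (hC : 0 < C) (hs : 0 < s) (hδ₀ : 0 < δ₀)
    (hdecay : ∀ x δ, 0 < δ → δ ≤ δ₀ → μ (closedBall x δ) ≤ ENNReal.ofReal (C * δ ^ s))
    (x : EuclideanSpace ℝ (Fin 2)) (hx0 : μ {x} = 0)
    (ρ : ℝ) (hρ : 0 < ρ) (hρδ : ρ ≤ δ₀) :
    ∫⁻ y in ball x ρ, ENNReal.ofReal (dist x y ^ (-(s/2))) ∂μ ≤
      ENNReal.ofReal (C * 2^(s/2) * (1 - (2:ℝ)^(-(s/2)))⁻¹ * ρ^(s/2)) := by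
  set q : ℝ := (2:ℝ)^(-(s/2)) with hq
  have hq0 : 0 < q := Real.rpow_pos_of_pos two_pos _
  have hq1 : q < 1 :=
    Real.rpow_lt_one_of_one_lt_of_neg one_lt_two (by linarith [half_pos hs])
  set A : ℕ → Set (EuclideanSpace ℝ (Fin 2)) :=
    fun k => ball x (ρ/2^k) \ ball x (ρ/2^(k+1)) with hA
  have hcover : ball x ρ ⊆ {x} ∪ ⋃ k, A k := by
    intro y hy
    by_cases hxy : y = x
    · exact Or.inl (by simp [hxy])
    right
    have hd : 0 < dist y x := dist_pos.mpr hxy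
    have hdρ : dist y x < ρ := mem_ball.mp hy
    have hex : ∃ k : ℕ, ρ / 2^(k+1) ≤ dist y x := by
      obtain ⟨n, hn⟩ := exists_pow_lt_of_lt_one (div_pos hd hρ) (by norm_num : (1:ℝ)/2 < 1)
      refine ⟨n, ?_⟩
      have h1 : ρ * (1/2)^n < ρ * (dist y x / ρ) := by
        exact mul_lt_mul_of_pos_left hn hρ
      rw [mul_div_cancel₀ _ hρ.ne'] at h1
      have h2 : ρ / 2^(n+1) ≤ ρ / 2^n := by
        apply div_le_div_of_nonneg_left hρ.le (by positivity)
        exact pow_le_pow_right₀ one_le_two (Nat.le_succ n)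
      have h3 : ρ / 2^n = ρ * (1/2)^n := by
        rw [div_pow, one_pow]; ring
      linarith
    set k := Nat.find hex with hk
    have hks : ρ / 2^(k+1) ≤ dist y x := Nat.find_spec hex
    refine Set.mem_iUnion.mpr ⟨k, ?_, ?_⟩
    · rw [mem_ball]
      rcases Nat.eq_zero_or_pos k with h0 | hpos
      · rw [h0]; simpa using hdρ
      · have := Nat.find_min hex (Nat.sub_lt hpos one_pos)
        rw [not_le] at this
        have hkk : k - 1 + 1 = k := Nat.succ_pred_eq_of_pos hpos
        rwa [hkk] at this
    · exact fun hmem => (not_lt.mpr hks) (mem_ball.mp hmem)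
  have hstep : ∀ k : ℕ, ∫⁻ y in A k, ENNReal.ofReal (dist x y ^ (-(s/2))) ∂μ
      ≤ ENNReal.ofReal (C * 2^(s/2) * ρ^(s/2) * q^k) := by
    intro k
    have hrk : 0 < ρ / 2^k := by positivity
    have hbound : ∀ y ∈ A k, ENNReal.ofReal (dist x y ^ (-(s/2)))
        ≤ ENNReal.ofReal ((ρ/2^(k+1)) ^ (-(s/2))) := by
      intro y hy
      apply ENNReal.ofReal_le_ofReal
      have h1 : ρ/2^(k+1) ≤ dist x y := by
        rw [dist_comm]
        have := hy.2
        rw [mem_ball, not_lt] at this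
        exact this
      exact Real.rpow_le_rpow_of_nonpos (by positivity) h1 (by linarith [half_pos hs])
    calc ∫⁻ y in A k, ENNReal.ofReal (dist x y ^ (-(s/2))) ∂μ
        ≤ ∫⁻ _ in A k, ENNReal.ofReal ((ρ/2^(k+1))^(-(s/2))) ∂μ :=
          setLIntegral_mono measurable_const hbound
      _ = ENNReal.ofReal ((ρ/2^(k+1))^(-(s/2))) * μ (A k) := setLIntegral_const _ _
      _ ≤ ENNReal.ofReal ((ρ/2^(k+1))^(-(s/2))) * ENNReal.ofReal (C * (ρ/2^k)^s) := by
          apply mul_le_mul_right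
          refine le_trans (measure_mono ?_) (hdecay x (ρ/2^k) hrk ?_)
          · exact Set.diff_subset.trans (ball_subset_closedBall)
          · have h5 : ρ / 2^k ≤ ρ := div_le_self hρ.le (one_le_pow₀ one_le_two)
            linarith
      _ = ENNReal.ofReal ((ρ/2^(k+1))^(-(s/2)) * (C * (ρ/2^k)^s)) :=
          (ENNReal.ofReal_mul (Real.rpow_nonneg (by positivity) _)).symm
      _ = ENNReal.ofReal (C * 2^(s/2) * ρ^(s/2) * q^k) := by
          rw [auxRealCalc C s ρ hρ k]
  calc ∫⁻ y in ball x ρ, ENNReal.ofReal (dist x y ^ (-(s/2))) ∂μ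
      ≤ ∫⁻ y in {x} ∪ ⋃ k, A k, ENNReal.ofReal (dist x y ^ (-(s/2))) ∂μ :=
        lintegral_mono_set hcover
    _ ≤ (∫⁻ y in {x}, ENNReal.ofReal (dist x y ^ (-(s/2))) ∂μ)
        + ∫⁻ y in ⋃ k, A k, ENNReal.ofReal (dist x y ^ (-(s/2))) ∂μ :=
        lintegral_union_le _ _ _
    _ = ∫⁻ y in ⋃ k, A k, ENNReal.ofReal (dist x y ^ (-(s/2))) ∂μ := by
        rw [setLIntegral_measure_zero _ _ hx0, zero_add]
    _ ≤ ∑' k, ∫⁻ y in A k, ENNReal.ofReal (dist x y ^ (-(s/2))) ∂μ :=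
        lintegral_iUnion_le _ _
    _ ≤ ∑' k, ENNReal.ofReal (C * 2^(s/2) * ρ^(s/2) * q^k) :=
        ENNReal.tsum_le_tsum hstep
    _ = ENNReal.ofReal (C * 2^(s/2) * ρ^(s/2)) * ∑' k, (ENNReal.ofReal q)^k := by
        rw [← ENNReal.tsum_mul_left]
        congr 1 with k
        rw [← ENNReal.ofReal_pow hq0.le, ← ENNReal.ofReal_mul (by positivity)]
    _ = ENNReal.ofReal (C * 2^(s/2) * ρ^(s/2)) * (1 - ENNReal.ofReal q)⁻¹ := by
        rw [ENNReal.tsum_geometric]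
    _ = ENNReal.ofReal (C * 2^(s/2) * (1 - q)⁻¹ * ρ^(s/2)) := by
        rw [← ENNReal.ofReal_one, ← ENNReal.ofReal_sub _ hq0.le,
          ← ENNReal.ofReal_inv_of_pos (by linarith), ← ENNReal.ofReal_mul (by positivity)]
        congr 1
        ring


lemma auxNear
    (Ω : Set (EuclideanSpace ℝ (Fin 2))) (hΩo : IsOpen Ω)
    (μ : Measure (EuclideanSpace ℝ (Fin 2)))
    (C s δ₀ : ℝ) (hC : 0 < C) (hs : 0 < s) (hδ₀ : 0 < δ₀) (hδ₀1 : δ₀ < 1)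
    (hdecay : ∀ x δ, 0 < δ → δ ≤ δ₀ → μ (closedBall x δ) ≤ ENNReal.ofReal (C * δ ^ s))
    (hatom : ∀ x, μ {x} = 0)
    (G : EuclideanSpace ℝ (Fin 2) → EuclideanSpace ℝ (Fin 2) → ℝ)
    (f : EuclideanSpace ℝ (Fin 2) → ℝ) (hf : MemLp f 2 (μ.restrict Ω))
    (A0 : ℝ) (hA0 : 0 < A0)
    (hGb : ∀ x ∈ Ω, ∀ y ∈ Ω, y ≠ x → dist x y < 1 → |G x y| ≤ A0 * dist x y ^ (-(s/4)))
    (x : EuclideanSpace ℝ (Fin 2)) (hx : x ∈ Ω) (ρ : ℝ) (hρ : 0 < ρ) (hρδ : ρ ≤ δ₀) :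
    ∫⁻ y in Ω ∩ ball x ρ, ENNReal.ofReal |G x y * f y| ∂μ ≤
      ENNReal.ofReal ((A0^2 * (C * 2^(s/2) * (1 - (2:ℝ)^(-(s/2)))⁻¹))^((1:ℝ)/2)
        * (eLpNorm f 2 (μ.restrict Ω)).toReal * ρ^(s/4)) := by
  set K1 : ℝ := C * 2^(s/2) * (1 - (2:ℝ)^(-(s/2)))⁻¹ with hK1
  have hq1 : (2:ℝ)^(-(s/2)) < 1 :=
    Real.rpow_lt_one_of_one_lt_of_neg one_lt_two (by linarith [half_pos hs])
  have hq0 : (0:ℝ) < (2:ℝ)^(-(s/2)) := Real.rpow_pos_of_pos two_pos _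
  have hK1pos : 0 < K1 := by
    apply mul_pos (mul_pos hC (Real.rpow_pos_of_pos two_pos _))
    exact inv_pos.mpr (by linarith)
  set Φr : ℝ := (eLpNorm f 2 (μ.restrict Ω)).toReal with hΦr
  have hΦnn : 0 ≤ Φr := ENNReal.toReal_nonneg
  set S : Set (EuclideanSpace ℝ (Fin 2)) := Ω ∩ ball x ρ with hS
  have hSmeas : MeasurableSet S := (hΩo.inter isOpen_ball).measurableSet
  set g : EuclideanSpace ℝ (Fin 2) → ℝ≥0∞ :=
    fun y => ENNReal.ofReal (A0 * dist x y ^ (-(s/4))) with hg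
  set φ : EuclideanSpace ℝ (Fin 2) → ℝ≥0∞ := fun y => (‖f y‖₊ : ℝ≥0∞) with hφ
  have haeS : ∀ᵐ y ∂(μ.restrict S), y ∈ S := ae_restrict_mem hSmeas
  have haex : ∀ᵐ y ∂(μ.restrict S), y ≠ x := by
    have hres : (μ.restrict S) {x} = 0 :=
      le_antisymm (le_trans (Measure.restrict_apply_le _ _) (hatom x).le) zero_le
    rw [ae_iff]
    refine measure_mono_null (fun y hy => ?_) hres
    simp only [Set.mem_setOf_eq, not_not] at hy
    simp [hy]
  have step1 : ∫⁻ y in S, ENNReal.ofReal |G x y * f y| ∂μ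
      ≤ ∫⁻ y in S, g y * φ y ∂μ := by
    apply lintegral_mono_ae
    filter_upwards [haeS, haex] with y hyS hyx
    have hyΩ : y ∈ Ω := hyS.1
    have hyd : dist x y < 1 := by
      rw [dist_comm]
      exact lt_of_lt_of_le (mem_ball.mp hyS.2) (le_trans hρδ hδ₀1.le)
    have hGxy : |G x y| ≤ A0 * dist x y ^ (-(s/4)) := hGb x hx y hyΩ hyx hyd
    calc ENNReal.ofReal |G x y * f y| = ENNReal.ofReal |G x y| * ENNReal.ofReal |f y| := by
          rw [abs_mul, ENNReal.ofReal_mul (abs_nonneg _)]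
      _ ≤ g y * φ y := by
          apply mul_le_mul'
          · exact ENNReal.ofReal_le_ofReal hGxy
          · exact (Real.enorm_eq_ofReal_abs (f y)).symm.le
  have hgmeas : AEMeasurable g (μ.restrict S) := by
    apply Measurable.aemeasurable
    apply ENNReal.measurable_ofReal.comp
    apply Measurable.const_mul
    apply Measurable.pow
    · exact (continuous_const.dist continuous_id).measurable
    · exact measurable_const
  have hφmeas : AEMeasurable φ (μ.restrict S) :=
    (hf.1.mono_measure (Measure.restrict_mono Set.inter_subset_left le_rfl)).enorm
  have holder : ∫⁻ y in S, g y * φ y ∂μ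
      ≤ (∫⁻ y in S, g y ^ (2:ℝ) ∂μ) ^ ((1:ℝ)/2) * (∫⁻ y in S, φ y ^ (2:ℝ) ∂μ) ^ ((1:ℝ)/2) := by
    have hpq : Real.HolderConjugate 2 2 := Real.HolderConjugate.two_two
    have := ENNReal.lintegral_mul_le_Lp_mul_Lq (μ.restrict S) hpq hgmeas hφmeas
    simpa using this
  have factor1 : ∫⁻ y in S, g y ^ (2:ℝ) ∂μ ≤ ENNReal.ofReal (A0^2 * K1 * ρ^(s/2)) := by
    have hptw : ∀ y, g y ^ (2:ℝ)
        = ENNReal.ofReal (A0^2) * ENNReal.ofReal (dist x y ^ (-(s/2))) := by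
      intro y
      have hd2 : (dist x y ^ (-(s/4)))^(2:ℕ) = dist x y ^ (-(s/2)) := by
        rw [← Real.rpow_natCast (dist x y ^ (-(s/4))) 2, ← Real.rpow_mul dist_nonneg]
        congr 1
        push_cast
        ring
      rw [hg, ENNReal.ofReal_rpow_of_nonneg (by positivity) (by norm_num),
        Real.rpow_two, mul_pow, hd2, ENNReal.ofReal_mul (by positivity)]
    calc ∫⁻ y in S, g y ^ (2:ℝ) ∂μ
        = ∫⁻ y in S, ENNReal.ofReal (A0^2) * ENNReal.ofReal (dist x y ^ (-(s/2))) ∂μ := by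
          exact lintegral_congr fun y => hptw y
      _ = ENNReal.ofReal (A0^2) * ∫⁻ y in S, ENNReal.ofReal (dist x y ^ (-(s/2))) ∂μ :=
          lintegral_const_mul' _ _ ENNReal.ofReal_ne_top
      _ ≤ ENNReal.ofReal (A0^2) * ∫⁻ y in ball x ρ, ENNReal.ofReal (dist x y ^ (-(s/2))) ∂μ :=
          mul_le_mul_right (lintegral_mono_set Set.inter_subset_right) _
      _ ≤ ENNReal.ofReal (A0^2) * ENNReal.ofReal (K1 * ρ^(s/2)) := by
          apply mul_le_mul_right
          have := auxAnnuli μ C s δ₀ hC hs hδ₀ hdecay x (hatom x) ρ hρ hρδ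
          calc ∫⁻ y in ball x ρ, ENNReal.ofReal (dist x y ^ (-(s/2))) ∂μ
              ≤ ENNReal.ofReal (C * 2^(s/2) * (1 - (2:ℝ)^(-(s/2)))⁻¹ * ρ^(s/2)) := this
            _ = ENNReal.ofReal (K1 * ρ^(s/2)) := by rw [hK1]
      _ = ENNReal.ofReal (A0^2 * K1 * ρ^(s/2)) := by
          rw [← ENNReal.ofReal_mul (by positivity)]
          ring_nf
  have factor1' : (∫⁻ y in S, g y ^ (2:ℝ) ∂μ) ^ ((1:ℝ)/2)
      ≤ ENNReal.ofReal ((A0^2 * K1)^((1:ℝ)/2) * ρ^(s/4)) := by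
    calc (∫⁻ y in S, g y ^ (2:ℝ) ∂μ) ^ ((1:ℝ)/2)
        ≤ (ENNReal.ofReal (A0^2 * K1 * ρ^(s/2))) ^ ((1:ℝ)/2) :=
          ENNReal.rpow_le_rpow factor1 (by norm_num)
      _ = ENNReal.ofReal ((A0^2 * K1 * ρ^(s/2)) ^ ((1:ℝ)/2)) :=
          ENNReal.ofReal_rpow_of_nonneg (by positivity) (by norm_num)
      _ = ENNReal.ofReal ((A0^2 * K1)^((1:ℝ)/2) * ρ^(s/4)) := by
          congr 1
          rw [Real.mul_rpow (by positivity) (Real.rpow_nonneg hρ.le _),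
            ← Real.rpow_mul hρ.le]
          congr 1
          ring
  have factor2 : (∫⁻ y in S, φ y ^ (2:ℝ) ∂μ) ^ ((1:ℝ)/2) ≤ ENNReal.ofReal Φr := by
    have h1 : (∫⁻ y in S, φ y ^ (2:ℝ) ∂μ) ≤ ∫⁻ y in Ω, φ y ^ (2:ℝ) ∂μ :=
      lintegral_mono' (Measure.restrict_mono Set.inter_subset_left le_rfl) (le_refl _)
    have h2 : (∫⁻ y in Ω, φ y ^ (2:ℝ) ∂μ) ^ ((1:ℝ)/2) = eLpNorm f 2 (μ.restrict Ω) := by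
      rw [eLpNorm_eq_lintegral_rpow_enorm_toReal (by norm_num) (by norm_num)]
      norm_num
      rfl
    calc (∫⁻ y in S, φ y ^ (2:ℝ) ∂μ) ^ ((1:ℝ)/2)
        ≤ (∫⁻ y in Ω, φ y ^ (2:ℝ) ∂μ) ^ ((1:ℝ)/2) := ENNReal.rpow_le_rpow h1 (by norm_num)
      _ = eLpNorm f 2 (μ.restrict Ω) := h2
      _ = ENNReal.ofReal Φr := (ENNReal.ofReal_toReal hf.2.ne).symm
  calc ∫⁻ y in S, ENNReal.ofReal |G x y * f y| ∂μ
      ≤ ∫⁻ y in S, g y * φ y ∂μ := step1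
    _ ≤ (∫⁻ y in S, g y ^ (2:ℝ) ∂μ) ^ ((1:ℝ)/2) * (∫⁻ y in S, φ y ^ (2:ℝ) ∂μ) ^ ((1:ℝ)/2) :=
        holder
    _ ≤ ENNReal.ofReal ((A0^2 * K1)^((1:ℝ)/2) * ρ^(s/4)) * ENNReal.ofReal Φr :=
        mul_le_mul' factor1' factor2
    _ = ENNReal.ofReal ((A0^2 * K1)^((1:ℝ)/2) * Φr * ρ^(s/4)) := by
        rw [← ENNReal.ofReal_mul (by positivity)]
        ring_nf


set_option maxHeartbeats 1000000 in
/-- Interior continuity of the Green operator for d = 2. -/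
theorem green_operator_continuousOn
    (Ω : Set (EuclideanSpace ℝ (Fin 2)))
    (hΩo : IsOpen Ω) (hΩconn : IsConnected Ω) (hΩb : Bornology.IsBounded Ω)
    (μ : Measure (EuclideanSpace ℝ (Fin 2))) [IsFiniteMeasure μ]
    (hsupp : μ (closure Ω)ᶜ = 0) (hμΩ : 0 < μ Ω)
    (hdim : 0 < lowerLinftyDim μ)
    (h : EuclideanSpace ℝ (Fin 2) → EuclideanSpace ℝ (Fin 2) → ℝ)
    (hh : ContinuousOn (fun p : EuclideanSpace ℝ (Fin 2) × EuclideanSpace ℝ (Fin 2) =>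
      h p.1 p.2) (closure Ω ×ˢ closure Ω))
    (G : EuclideanSpace ℝ (Fin 2) → EuclideanSpace ℝ (Fin 2) → ℝ)
    (hG : ∀ x y, x ≠ y → G x y = -(1 / (2 * Real.pi)) * Real.log (dist x y) + h x y)
    (f : EuclideanSpace ℝ (Fin 2) → ℝ) (hf : MemLp f 2 (μ.restrict Ω)) :
    ContinuousOn (fun x => ∫ y in Ω, G x y * f y ∂μ) Ω := by
  obtain ⟨s, C, δ₀, hs, hC, hδ₀, hδ₀1, hdecay⟩ := auxDecay μ hdim
  have hatom : ∀ x, μ {x} = 0 := auxAtom μ C s δ₀ hs hδ₀ hdecay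
  -- bound for h on the compact product
  have hKc : IsCompact (closure Ω ×ˢ closure Ω) :=
    hΩb.isCompact_closure.prod hΩb.isCompact_closure
  obtain ⟨M, hM⟩ := hKc.exists_bound_of_continuousOn hh
  set M' : ℝ := max M 0 with hM'
  have hM'0 : 0 ≤ M' := le_max_right _ _
  have hMbd : ∀ x ∈ closure Ω, ∀ y ∈ closure Ω, |h x y| ≤ M' := by
    intro x hx y hy
    have := hM (x, y) ⟨hx, hy⟩
    simp only [Real.norm_eq_abs] at this
    exact this.trans (le_max_left _ _)
  set c : ℝ := 1 / (2 * Real.pi) with hc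
  have hc0 : 0 < c := by
    rw [hc]; positivity
  set A0 : ℝ := c * (4 / s) + M' with hA0def
  have hA0 : 0 < A0 := by
    rw [hA0def]
    exact add_pos_of_pos_of_nonneg (mul_pos hc0 (by positivity)) hM'0
  -- diameter bound
  obtain ⟨D, hD⟩ := Metric.isBounded_iff.mp hΩb.closure
  set Dd : ℝ := max D 1 with hDd
  have hDd1 : 1 ≤ Dd := le_max_right _ _
  have hDdbd : ∀ x ∈ closure Ω, ∀ y ∈ closure Ω, dist x y ≤ Dd :=
    fun x hx y hy => (hD hx hy).trans (le_max_left _ _)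
  -- pointwise kernel bound near the diagonal
  have hGb : ∀ x ∈ Ω, ∀ y ∈ Ω, y ≠ x → dist x y < 1 →
      |G x y| ≤ A0 * dist x y ^ (-(s/4)) := by
    intro x hx y hy hyx hd1
    have hd0 : 0 < dist x y := dist_pos.mpr (Ne.symm hyx)
    have hGf : G x y = -c * Real.log (dist x y) + h x y := hG x y (Ne.symm hyx)
    have hlogb : |Real.log (dist x y)| ≤ (4/s) * dist x y ^ (-(s/4)) := by
      have hlneg : Real.log (dist x y) ≤ 0 := Real.log_nonpos hd0.le hd1.le
      rw [abs_of_nonpos hlneg, ← Real.log_inv]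
      have hinv : 0 < (dist x y)⁻¹ := by positivity
      have h1 : Real.log (((dist x y)⁻¹) ^ (s/4)) ≤ ((dist x y)⁻¹) ^ (s/4) :=
        le_trans (Real.log_le_sub_one_of_pos (Real.rpow_pos_of_pos hinv _)) (by linarith)
      rw [Real.log_rpow hinv] at h1
      have h2 : ((dist x y)⁻¹) ^ (s/4) = dist x y ^ (-(s/4)) := by
        rw [Real.inv_rpow hd0.le, ← Real.rpow_neg hd0.le]
      rw [h2] at h1
      have hs4 : 0 < s/4 := by linarith
      calc Real.log (dist x y)⁻¹ = (4/s) * (s/4 * Real.log (dist x y)⁻¹) := by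
            field_simp
        _ ≤ (4/s) * dist x y ^ (-(s/4)) := by
            apply mul_le_mul_of_nonneg_left h1 (by positivity)
    have hone : 1 ≤ dist x y ^ (-(s/4)) :=
      Real.one_le_rpow_of_pos_of_le_one_of_nonpos hd0 hd1.le (by linarith)
    have hhb : |h x y| ≤ M' := hMbd x (subset_closure hx) y (subset_closure hy)
    calc |G x y| = |(-c) * Real.log (dist x y) + h x y| := by rw [hGf]
      _ ≤ |(-c) * Real.log (dist x y)| + |h x y| := abs_add_le _ _
      _ = c * |Real.log (dist x y)| + |h x y| := by
          rw [abs_mul, abs_neg, abs_of_pos hc0]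
      _ ≤ c * ((4/s) * dist x y ^ (-(s/4))) + M' * dist x y ^ (-(s/4)) := by
          have := mul_le_mul_of_nonneg_left hlogb hc0.le
          have h3 : |h x y| ≤ M' * dist x y ^ (-(s/4)) := by
            calc |h x y| ≤ M' := hhb
              _ = M' * 1 := (mul_one _).symm
              _ ≤ M' * dist x y ^ (-(s/4)) := by
                  apply mul_le_mul_of_nonneg_left hone hM'0
          linarith
      _ = A0 * dist x y ^ (-(s/4)) := by rw [hA0def]; ring
  -- integrability of f
  have hfint : Integrable f (μ.restrict Ω) := hf.integrable one_le_two
  -- a.e.-strong measurability of the integrand rows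
  have hGf_meas : ∀ x ∈ Ω, AEStronglyMeasurable (fun y => G x y * f y) (μ.restrict Ω) := by
    intro x hx
    have hψm : AEStronglyMeasurable
        (fun y => -c * Real.log (dist x y) + h x y) (μ.restrict Ω) := by
      apply AEStronglyMeasurable.add
      · apply Measurable.aestronglyMeasurable
        exact (Real.measurable_log.comp
          ((continuous_const.dist continuous_id).measurable)).const_mul _
      · have hcont : ContinuousOn (fun y => h x y) (closure Ω) := by
          have hmap : Set.MapsTo (fun y => ((x, y) :
              EuclideanSpace ℝ (Fin 2) × EuclideanSpace ℝ (Fin 2))) (closure Ω)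
              (closure Ω ×ˢ closure Ω) :=
            fun y hy => ⟨subset_closure hx, hy⟩
          exact hh.comp ((continuous_const.prodMk continuous_id).continuousOn) hmap
        exact (hcont.mono subset_closure).aestronglyMeasurable hΩo.measurableSet
    have haex : ∀ᵐ y ∂(μ.restrict Ω), y ≠ x := by
      have hres : (μ.restrict Ω) {x} = 0 :=
        le_antisymm (le_trans (Measure.restrict_apply_le _ _) (hatom x).le) zero_le
      rw [ae_iff]
      refine measure_mono_null (fun y hy => ?_) hres
      simp only [Set.mem_setOf_eq, not_not] at hy
      simp [hy]
    have := hψm.congr (f := fun y => -c * Real.log (dist x y) + h x y)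
      (g := fun y => G x y) ?_
    · exact this.mul hf.1
    · filter_upwards [haex] with y hyx
      rw [hG x y (Ne.symm hyx), hc]
  -- main continuity argument
  apply continuousOn_of_forall_continuousAt
  intro x₀ hx₀
  rw [Metric.continuousAt_iff]
  intro ε hε
  set Kc : ℝ := (A0^2 * (C * 2^(s/2) * (1 - (2:ℝ)^(-(s/2)))⁻¹))^((1:ℝ)/2)
    * (eLpNorm f 2 (μ.restrict Ω)).toReal with hKc
  have hKc0 : 0 ≤ Kc := by
    have hq1 : (2:ℝ)^(-(s/2)) < 1 :=
      Real.rpow_lt_one_of_one_lt_of_neg one_lt_two (by linarith [half_pos hs])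
    apply mul_nonneg _ ENNReal.toReal_nonneg
    apply Real.rpow_nonneg
    apply mul_nonneg (by positivity)
    apply mul_nonneg (by positivity)
    exact inv_nonneg.mpr (by linarith)
  obtain ⟨r₀, hr₀, hball⟩ := Metric.isOpen_iff.mp hΩo x₀ hx₀
  -- choose r
  have hrt : Tendsto (fun r : ℝ => Kc * 2^(s/4) * r^(s/4)) (𝓝[>] (0:ℝ)) (𝓝 0) := by
    have h1 : Tendsto (fun r : ℝ => r ^ (s/4)) (𝓝[>] (0:ℝ)) (𝓝 0) := by
      have := (Real.continuousAt_rpow_const 0 (s/4) (Or.inr (by positivity))).tendsto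
      rw [Real.zero_rpow (by positivity : (0:ℝ) < s/4).ne'] at this
      exact this.mono_left nhdsWithin_le_nhds
    simpa using h1.const_mul (Kc * 2^(s/4))
  have hmin0 : 0 < min (δ₀/2) r₀ := lt_min (by linarith) hr₀
  have hev : ∀ᶠ r in 𝓝[>] (0:ℝ),
      Kc * 2^(s/4) * r^(s/4) < ε/4 ∧ r ∈ Set.Ioo (0:ℝ) (min (δ₀/2) r₀) := by
    refine (hrt.eventually_lt_const (by positivity : (0:ℝ) < ε/4)).and ?_
    exact Ioo_mem_nhdsGT hmin0
  obtain ⟨r, hεr', hrIoo⟩ := hev.exists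
  have hr : 0 < r := hrIoo.1
  have hrδ : 2 * r ≤ δ₀ := by
    have := hrIoo.2
    have h1 : r < δ₀/2 := lt_of_lt_of_le this (min_le_left _ _)
    linarith
  have hrr₀ : r < r₀ := lt_of_lt_of_le hrIoo.2 (min_le_right _ _)
  have hεr : Kc * (2*r)^(s/4) < ε/4 := by
    rw [Real.mul_rpow (by norm_num) hr.le, ← mul_assoc]
    exact hεr'
  set B : Set (EuclideanSpace ℝ (Fin 2)) := ball x₀ r with hB
  set N : Set (EuclideanSpace ℝ (Fin 2)) := Ω ∩ B with hN
  set T : Set (EuclideanSpace ℝ (Fin 2)) := Ω \ B with hT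
  have hTmeas : MeasurableSet T := hΩo.measurableSet.diff measurableSet_ball
  have hTΩ : T ⊆ Ω := Set.diff_subset
  -- near-part control
  have hNearL : ∀ x ∈ Ω, dist x x₀ < r/2 →
      (∫⁻ y in N, ENNReal.ofReal |G x y * f y| ∂μ) ≤ ENNReal.ofReal (Kc * (2*r)^(s/4)) := by
    intro x hx hxd
    have hsub : N ⊆ Ω ∩ ball x (2*r) := by
      rintro y ⟨hy1, hy2⟩
      refine ⟨hy1, mem_ball.mpr ?_⟩
      have h1 : dist y x₀ < r := mem_ball.mp hy2
      calc dist y x ≤ dist y x₀ + dist x₀ x := dist_triangle _ _ _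
        _ < r + r/2 := by rw [dist_comm x₀ x]; exact add_lt_add h1 hxd
        _ ≤ 2*r := by linarith
    calc (∫⁻ y in N, ENNReal.ofReal |G x y * f y| ∂μ)
        ≤ ∫⁻ y in Ω ∩ ball x (2*r), ENNReal.ofReal |G x y * f y| ∂μ :=
          lintegral_mono_set hsub
      _ ≤ ENNReal.ofReal ((A0^2 * (C * 2^(s/2) * (1 - (2:ℝ)^(-(s/2)))⁻¹))^((1:ℝ)/2)
            * (eLpNorm f 2 (μ.restrict Ω)).toReal * (2*r)^(s/4)) :=
          auxNear Ω hΩo μ C s δ₀ hC hs hδ₀ hδ₀1 hdecay hatom G f hf A0 hA0 hGb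
            x hx (2*r) (by linarith) hrδ
      _ = ENNReal.ofReal (Kc * (2*r)^(s/4)) := by rw [hKc]
  have hNear : ∀ x ∈ Ω, dist x x₀ < r/2 →
      |∫ y in N, G x y * f y ∂μ| ≤ ε/4 := by
    intro x hx hxd
    have h1 : ‖∫ y in N, G x y * f y ∂μ‖
        ≤ (∫⁻ y in N, ENNReal.ofReal ‖G x y * f y‖ ∂μ).toReal :=
      norm_integral_le_lintegral_norm _
    rw [Real.norm_eq_abs] at h1
    simp only [Real.norm_eq_abs] at h1
    refine h1.trans (ENNReal.toReal_le_of_le_ofReal (by positivity) ?_)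
    exact le_trans (hNearL x hx hxd) (ENNReal.ofReal_le_ofReal hεr.le)
  -- far kernel bound
  set Mfar : ℝ := c * (|Real.log (r/2)| + |Real.log Dd|) + M' with hMfar
  have hMfar0 : 0 ≤ Mfar := by
    rw [hMfar]
    exact add_nonneg (by positivity) hM'0
  have hGfar : ∀ x ∈ Ω, dist x x₀ < r/2 → ∀ y ∈ T, |G x y| ≤ Mfar := by
    intro x hx hxd y hy
    have hyΩ : y ∈ Ω := hy.1
    have hdl : r/2 ≤ dist x y := by
      have h1 : r ≤ dist y x₀ := by
        by_contra hcon
        exact hy.2 (mem_ball.mpr (lt_of_not_ge hcon))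
      have h2 : dist y x₀ ≤ dist y x + dist x x₀ := dist_triangle _ _ _
      rw [dist_comm x y]
      linarith
    have hd0 : 0 < dist x y := lt_of_lt_of_le (by linarith) hdl
    have hdu : dist x y ≤ Dd :=
      hDdbd x (subset_closure hx) y (subset_closure hyΩ)
    have hlog : |Real.log (dist x y)| ≤ |Real.log (r/2)| + |Real.log Dd| := by
      have h1 : Real.log (dist x y) ≤ Real.log Dd :=
        Real.log_le_log hd0 hdu
      have h2 : Real.log (r/2) ≤ Real.log (dist x y) :=
        Real.log_le_log (by linarith) hdl
      have h3 := le_abs_self (Real.log Dd)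
      have h4 := neg_abs_le (Real.log (r/2))
      have h5 := abs_nonneg (Real.log (r/2))
      have h6 := abs_nonneg (Real.log Dd)
      rw [abs_le]
      constructor <;> linarith
    have hxy : x ≠ y := fun hcon => by simp [hcon] at hd0
    rw [hG x y hxy]
    calc |(-(1 / (2 * Real.pi))) * Real.log (dist x y) + h x y|
        ≤ |(-(1 / (2 * Real.pi))) * Real.log (dist x y)| + |h x y| := abs_add_le _ _
      _ = c * |Real.log (dist x y)| + |h x y| := by
          rw [abs_mul, abs_neg, hc, abs_of_pos (by positivity : (0:ℝ) < 1 / (2*Real.pi))]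
      _ ≤ c * (|Real.log (r/2)| + |Real.log Dd|) + M' := by
          have := mul_le_mul_of_nonneg_left hlog hc0.le
          have h7 := hMbd x (subset_closure hx) y (subset_closure hyΩ)
          linarith
      _ = Mfar := hMfar.symm
  -- integrability on the far set
  have hfintT : Integrable f (μ.restrict T) :=
    hfint.mono_measure (Measure.restrict_mono hTΩ le_rfl)
  have hbdint : Integrable (fun y => Mfar * |f y|) (μ.restrict T) :=
    (hfintT.abs).const_mul _
  have hIntT : ∀ x ∈ Ω, dist x x₀ < r/2 →
      IntegrableOn (fun y => G x y * f y) T μ := by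
    intro x hx hxd
    refine Integrable.mono hbdint
      ((hGf_meas x hx).mono_measure (Measure.restrict_mono hTΩ le_rfl)) ?_
    filter_upwards [ae_restrict_mem hTmeas] with y hy
    rw [Real.norm_eq_abs, Real.norm_eq_abs, abs_mul, abs_mul, abs_of_nonneg hMfar0,
      abs_abs]
    exact mul_le_mul_of_nonneg_right (hGfar x hx hxd y hy) (abs_nonneg _)
  -- integrability on the near set
  have hIntN : ∀ x ∈ Ω, dist x x₀ < r/2 →
      IntegrableOn (fun y => G x y * f y) N μ := by
    intro x hx hxd
    refine ⟨(hGf_meas x hx).mono_measure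
      (Measure.restrict_mono Set.inter_subset_left le_rfl), ?_⟩
    rw [hasFiniteIntegral_iff_norm]
    simp only [Real.norm_eq_abs]
    exact lt_of_le_of_lt (hNearL x hx hxd) ENNReal.ofReal_lt_top
  -- splitting
  have hNT : N ∪ T = Ω := Set.inter_union_diff Ω B
  have hdisj : Disjoint N T :=
    Disjoint.mono_left Set.inter_subset_right Set.disjoint_sdiff_right
  have hsplit : ∀ x ∈ Ω, dist x x₀ < r/2 →
      ∫ y in Ω, G x y * f y ∂μ
        = (∫ y in N, G x y * f y ∂μ) + ∫ y in T, G x y * f y ∂μ := by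
    intro x hx hxd
    rw [← hNT]
    exact setIntegral_union hdisj hTmeas (hIntN x hx hxd) (hIntT x hx hxd)
  -- far-part continuity
  have hfar_cont : ContinuousAt (fun x => ∫ y in T, G x y * f y ∂μ) x₀ := by
    apply continuousAt_of_dominated (bound := fun y => Mfar * |f y|)
    · filter_upwards [(hΩo.inter isOpen_ball).mem_nhds
        ⟨hx₀, mem_ball_self (by positivity : (0:ℝ) < r/2)⟩] with x hx
      exact ((hGf_meas x hx.1).mono_measure (Measure.restrict_mono hTΩ le_rfl))
    · filter_upwards [(hΩo.inter isOpen_ball).mem_nhds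
        ⟨hx₀, mem_ball_self (by positivity : (0:ℝ) < r/2)⟩] with x hx
      filter_upwards [ae_restrict_mem hTmeas] with y hy
      have hxd : dist x x₀ < r/2 := mem_ball.mp hx.2
      rw [Real.norm_eq_abs, abs_mul]
      exact mul_le_mul_of_nonneg_right (hGfar x hx.1 hxd y hy) (abs_nonneg _)
    · exact hbdint
    · filter_upwards [ae_restrict_mem hTmeas] with y hy
      apply ContinuousAt.mul _ continuousAt_const
      have hyΩ : y ∈ Ω := hy.1
      have hd0 : 0 < dist x₀ y := by
        have h1 : r ≤ dist y x₀ := by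
          by_contra hcon
          exact hy.2 (mem_ball.mpr (lt_of_not_ge hcon))
        rw [dist_comm]
        linarith
      have hne : x₀ ≠ y := fun hcon => by simp [hcon] at hd0
      have hψc : ContinuousAt
          (fun x => -(1 / (2 * Real.pi)) * Real.log (dist x y) + h x y) x₀ := by
        apply ContinuousAt.add
        · apply ContinuousAt.mul continuousAt_const
          have h1 : ContinuousAt (fun x : EuclideanSpace ℝ (Fin 2) => dist x y) x₀ :=
            (Continuous.dist continuous_id continuous_const).continuousAt
          exact ContinuousAt.comp (f := fun x : EuclideanSpace ℝ (Fin 2) => dist x y)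
            (g := Real.log) (Real.continuousAt_log hd0.ne') h1
        · have hnb : closure Ω ×ˢ closure Ω ∈ 𝓝 ((x₀, y) :
              EuclideanSpace ℝ (Fin 2) × EuclideanSpace ℝ (Fin 2)) :=
            prod_mem_nhds
              (mem_of_superset (hΩo.mem_nhds hx₀) subset_closure)
              (mem_of_superset (hΩo.mem_nhds hyΩ) subset_closure)
          exact ContinuousAt.comp
            (f := fun x : EuclideanSpace ℝ (Fin 2) =>
              ((x, y) : EuclideanSpace ℝ (Fin 2) × EuclideanSpace ℝ (Fin 2)))
            (hh.continuousAt hnb)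
            ((continuous_id.prodMk continuous_const).continuousAt)
      apply hψc.congr
      filter_upwards [isOpen_ne.mem_nhds hne] with x hxne
      exact (hG x y hxne).symm
  -- conclusion
  obtain ⟨δ₁, hδ₁, hfarδ⟩ := Metric.continuousAt_iff.mp hfar_cont (ε/4) (by positivity)
  refine ⟨min (r/2) δ₁, by positivity, ?_⟩
  intro x hxd
  have hxr2 : dist x x₀ < r/2 := lt_of_lt_of_le hxd (min_le_left _ _)
  have hxδ₁ : dist x x₀ < δ₁ := lt_of_lt_of_le hxd (min_le_right _ _)
  have hxΩ : x ∈ Ω := by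
    apply hball
    rw [mem_ball]
    calc dist x x₀ < r/2 := hxr2
      _ < r₀ := by linarith
  have hx₀r2 : dist x₀ x₀ < r/2 := by simp; positivity
  have hfar : |(∫ y in T, G x y * f y ∂μ) - ∫ y in T, G x₀ y * f y ∂μ| < ε/4 := by
    have := hfarδ hxδ₁
    rwa [Real.dist_eq] at this
  rw [Real.dist_eq, hsplit x hxΩ hxr2, hsplit x₀ hx₀ hx₀r2]
  have hn1 := hNear x hxΩ hxr2
  have hn2 := hNear x₀ hx₀ hx₀r2
  set a1 := ∫ y in N, G x y * f y ∂μ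
  set a2 := ∫ y in T, G x y * f y ∂μ
  set b1 := ∫ y in N, G x₀ y * f y ∂μ
  set b2 := ∫ y in T, G x₀ y * f y ∂μ
  have htri : |a1 + a2 - (b1 + b2)| ≤ |a1| + |b1| + |a2 - b2| := by
    have h1 : a1 + a2 - (b1 + b2) = (a1 - b1) + (a2 - b2) := by ring
    rw [h1]
    calc |(a1 - b1) + (a2 - b2)| ≤ |a1 - b1| + |a2 - b2| := abs_add_le _ _
      _ ≤ (|a1| + |b1|) + |a2 - b2| := by
          have := abs_sub a1 b1
          linarith
  linarith [htri]
end
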